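/- In the chord-space model, the right creation and annihilation operators satisfy the generalized q-deformed oscillator relations: for all i, j ∈ {0,1}, a_{R,i} ∘ a†_{R,j} − Q(i,j)·(a†_{R,j} ∘ a_{R,i}) = δ_{ij}·id as linear operators on V. -/

import Mathlib

namespace DSSYK

/-- Binary strings (chord words); the letter `0` is `false`, the letter `1` is `true`. -/
abbrev Str : Type := List Bool

/-- The chord space: finitely supported complex functions on binary strings. -/
abbrev Sp : Type := Str →₀ ℂ

/-- Crossing weights: `Q 0 0 = q`, `Q 1 1 = q_m`, mixed crossings give `r`. -/
def Qmat (q qm r : ℝ) : Bool → Bool → ℂ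
  | false, false => (q : ℂ)
  | true,  true  => (qm : ℂ)
  | _,     _     => (r : ℂ)

/-- Right creation `a†_{R,i}`: append the letter `i` on the right. -/
noncomputable def creR (i : Bool) : Sp →ₗ[ℂ] Sp :=
  Finsupp.lift Sp ℂ Str fun w => Finsupp.single (w ++ [i]) 1

/-- Value of the right annihilation operator on a basis string: delete one letter
equal to `i`, weighted by the crossing factors with all letters to its right. -/
noncomputable def annVecR (Q : Bool → Bool → ℂ) (i : Bool) : Str → Sp
  | [] => 0
  | x :: t =>
      (if x = i then ((t.map (Q i)).prod) • Finsupp.single t (1 : ℂ) else 0)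
        + Finsupp.mapDomain (List.cons x) (annVecR Q i t)

/-- Right annihilation `a_{R,i}`. -/
noncomputable def annR (Q : Bool → Bool → ℂ) (i : Bool) : Sp →ₗ[ℂ] Sp :=
  Finsupp.lift Sp ℂ Str (annVecR Q i)

/-- Left creation `a†_{L,i}`: prepend the letter `i`. -/
noncomputable def creL (i : Bool) : Sp →ₗ[ℂ] Sp :=
  Finsupp.lift Sp ℂ Str fun w => Finsupp.single (i :: w) 1

/-- Value of the left annihilation operator on a basis string: delete one letter
equal to `i`, weighted by the crossing factors with all letters to its left. -/
noncomputable def annVecL (Q : Bool → Bool → ℂ) (i : Bool) : Str → Sp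
  | [] => 0
  | x :: t =>
      (if x = i then Finsupp.single t (1 : ℂ) else 0)
        + Q i x • Finsupp.mapDomain (List.cons x) (annVecL Q i t)

/-- Left annihilation `a_{L,i}`. -/
noncomputable def annL (Q : Bool → Bool → ℂ) (i : Bool) : Sp →ₗ[ℂ] Sp :=
  Finsupp.lift Sp ℂ Str (annVecL Q i)

/-- Diagonal weight operator `δ_w ↦ c₀^{N₀(w)} · c₁^{N₁(w)} · δ_w`, where `N₀, N₁`
count the `0`'s and `1`'s in `w`. -/
noncomputable def Wgen (c₀ c₁ : ℂ) : Sp →ₗ[ℂ] Sp :=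
  Finsupp.lift Sp ℂ Str fun w =>
    Finsupp.single w (c₀ ^ (w.count false) * c₁ ^ (w.count true))

/-- The chord-counting weight operator `W δ_w = q^{N₀(w)} r^{N₁(w)} δ_w`. -/
noncomputable def Wop (q r : ℝ) : Sp →ₗ[ℂ] Sp := Wgen (q : ℂ) (r : ℂ)

/-- Right boundary operators `H_{R,i} = a_{R,i} + a†_{R,i}`. -/
noncomputable def HR (Q : Bool → Bool → ℂ) (i : Bool) : Sp →ₗ[ℂ] Sp := annR Q i + creR i

/-- Left boundary operators `H_{L,i} = a_{L,i} + a†_{L,i}`. -/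
noncomputable def HL (Q : Bool → Bool → ℂ) (i : Bool) : Sp →ₗ[ℂ] Sp := annL Q i + creL i

/-- The vacuum `ω = δ_{[]}` (the empty string). -/
noncomputable def vac : Sp := Finsupp.single [] 1

/-- `ε v = v([])`, the coefficient of the empty string. -/
def eps (v : Sp) : ℂ := v []

end DSSYK

open DSSYK

lemma lift_single_aux (f : Str → Sp) (w : Str) (c : ℂ) :
    Finsupp.lift Sp ℂ Str f (Finsupp.single w c) = c • f w := by
  simp [Finsupp.lift_apply, Finsupp.sum_single_index]

lemma creR_eq_mapDomain (j : Bool) (v : Sp) :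
    creR j v = Finsupp.mapDomain (· ++ [j]) v := by
  induction v using Finsupp.induction_linear with
  | zero => simp
  | add f g hf hg => simp [map_add, Finsupp.mapDomain_add, hf, hg]
  | single w c =>
      simp [creR, lift_single_aux, Finsupp.mapDomain_single, Finsupp.smul_single]

lemma annVecR_append (Q : Bool → Bool → ℂ) (i j : Bool) (w : Str) :
    annVecR Q i (w ++ [j])
      = (if i = j then Finsupp.single w 1 else 0)
        + Q i j • Finsupp.mapDomain (· ++ [j]) (annVecR Q i w) := by
  induction w with
  | nil =>
      by_cases h : i = j
      · subst h; simp [annVecR]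
      · have h' : ¬ j = i := fun e => h e.symm
        simp [annVecR, h, h']
  | cons x t ih =>
      show annVecR Q i (x :: (t ++ [j])) = _
      rw [annVecR, ih, annVecR]
      simp only [Finsupp.mapDomain_add, Finsupp.mapDomain_smul, smul_add]
      have hcomp : ∀ (v : Sp),
          Finsupp.mapDomain (List.cons x) (Finsupp.mapDomain (· ++ [j]) v)
            = Finsupp.mapDomain (· ++ [j]) (Finsupp.mapDomain (List.cons x) v) := by
        intro v
        rw [← Finsupp.mapDomain_comp, ← Finsupp.mapDomain_comp]
        rfl
      rw [hcomp]
      have h1 : Finsupp.mapDomain (List.cons x) (if i = j then Finsupp.single t (1:ℂ) else 0)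
          = (if i = j then Finsupp.single (x :: t) (1:ℂ) else 0) := by
        by_cases h : i = j <;> simp [h, Finsupp.mapDomain_single]
      rw [h1]
      have h2 : (if x = i then (((t ++ [j]).map (Q i)).prod) • Finsupp.single (t ++ [j]) (1:ℂ) else 0)
          = Q i j • Finsupp.mapDomain (· ++ [j])
              (if x = i then ((t.map (Q i)).prod) • Finsupp.single t (1:ℂ) else 0) := by
        by_cases h : x = i
        · simp only [h, if_pos rfl, List.map_append, List.prod_append, List.map_cons,
            List.map_nil, List.prod_cons, List.prod_nil, mul_one, if_true,
            Finsupp.mapDomain_smul, Finsupp.mapDomain_single, smul_smul]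
          rw [mul_comm]
        · simp [h]
      rw [h2]
      abel

lemma annR_single (Q : Bool → Bool → ℂ) (i : Bool) (w : Str) :
    annR Q i (Finsupp.single w 1) = annVecR Q i w := by
  simp [annR, lift_single_aux]

/-- the right creation and annihilation operators satisfy the generalized
q-deformed oscillator relations
`a_{R,i} ∘ a†_{R,j} − Q(i,j)·(a†_{R,j} ∘ a_{R,i}) = δ_{ij}·id`. -/
theorem stmt_4 (q qm r : ℝ) (i j : Bool) :
    annR (Qmat q qm r) i ∘ₗ creR j
        - Qmat q qm r i j • (creR j ∘ₗ annR (Qmat q qm r) i)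
      = if i = j then (LinearMap.id : Sp →ₗ[ℂ] Sp) else 0 := by
  apply Finsupp.lhom_ext
  intro w b
  set Q := Qmat q qm r with hQ
  have hc : creR j (Finsupp.single w b) = Finsupp.single (w ++ [j]) b := by
    simp [creR, lift_single_aux, Finsupp.smul_single]
  have ha : ∀ u : Str, annR Q i (Finsupp.single u b) = b • annVecR Q i u := by
    intro u; simp [annR, lift_single_aux]
  simp only [LinearMap.sub_apply, LinearMap.comp_apply, LinearMap.smul_apply]
  rw [hc, ha, ha, annVecR_append, map_smul, creR_eq_mapDomain]
  by_cases h : i = j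
  · simp only [if_pos h, LinearMap.id_apply, smul_add]
    rw [smul_comm]
    simp [Finsupp.smul_single]
  · simp [h, smul_comm b]
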